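/- arXiv:1302.2713 — 2 statements merged into one kernel-verified Lean document; each statement's English description precedes it below -/
import Mathlib

section
/- Let f̃ ∈ ℝ^d and A = [ĩ¹ ⋯ ĩ^M], B = [ī¹ ⋯ ī^M] ∈ ℝ^{d×M} with BᵀA invertible. Define the antisymmetric (M+1)-tensor S̃ = (1/det(BᵀA)) f̃ ∧ ĩ¹ ∧ ⋯ ∧ ĩ^M. Then for every j, S̃_{j j₁ … j_M} ī¹_{j₁} ⋯ ī^M_{j_M} = (P f̃)_j where P = I - A(BᵀA)^{-1}Bᵀ. -/
open Matrix

private lemma det_updateRow_add_sum_smul {n R : Type*} [Fintype n] [DecidableEq n]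
    [CommRing R] (A : Matrix n n R) (i : n) (s : Finset n) (hi : i ∉ s) (c : n → R) :
    det (A.updateRow i (A i + ∑ m ∈ s, c m • A m)) = det A := by
  induction s using Finset.induction_on with
  | empty => simp
  | @insert a s ha ih =>
    have hia : i ≠ a := fun h => hi (h ▸ Finset.mem_insert_self a s)
    have his : i ∉ s := fun h => hi (Finset.mem_insert_of_mem h)
    rw [Finset.sum_insert ha, ← add_assoc, add_right_comm]
    set A' := A.updateRow i (A i + ∑ m ∈ s, c m • A m) with hA'
    have h1 : A i + ∑ m ∈ s, c m • A m = A' i := (A.updateRow_self).symm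
    have h2 : A' a = A a := Matrix.updateRow_ne hia.symm
    have h3 : ∀ x : n → R, A.updateRow i x = A'.updateRow i x := by
      intro x; ext k l
      rcases eq_or_ne k i with rfl | hk
      · simp
      · simp [Matrix.updateRow_ne hk, hA']
    rw [h1, ← h2, h3, Matrix.det_updateRow_add_smul_self A' hia (c a), hA', ih his]

/-- The contraction of S̃ = (1/det(BᵀA)) f̃ ∧ ĩ¹ ∧ ⋯ ∧ ĩ^M with the discrete gradients
ī¹,…,ī^M gives the oblique projection P f̃, where P = I - A(BᵀA)⁻¹Bᵀ. -/
theorem wedge_discrete_gradient_eq_projection {d M : ℕ} (hM : M < d)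
    (ftilde : Fin d → ℝ) (A B : Matrix (Fin d) (Fin M) ℝ)
    (hdet : (Bᵀ * A).det ≠ 0) (j₀ : Fin d) :
    ((Bᵀ * A).det)⁻¹ *
        ∑ j : Fin M → Fin d,
          (∑ σ : Equiv.Perm (Fin (M + 1)),
            ((Equiv.Perm.sign σ : ℤ) : ℝ) *
              ∏ k : Fin (M + 1),
                (Fin.cons ftilde (fun m : Fin M => Aᵀ m) : Fin (M + 1) → Fin d → ℝ) k
                  ((Fin.cons j₀ j : Fin (M + 1) → Fin d) (σ k))) *
          ∏ m : Fin M, B (j m) m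
      = ((((1 : Matrix (Fin d) (Fin d) ℝ) - A * (Bᵀ * A)⁻¹ * Bᵀ)) *ᵥ ftilde) j₀ := by
  classical
  set w : Fin (M + 1) → Fin d → ℝ := Fin.cons ftilde (fun m : Fin M => Aᵀ m) with hw
  -- the (M+1)×(M+1) matrix obtained from contracting
  set C : Matrix (Fin (M + 1)) (Fin (M + 1)) ℝ :=
    Matrix.of fun k => Fin.cons (w k j₀) (fun m : Fin M => ∑ i, w k i * B i m) with hC
  -- Step 1: the big sum is det C
  have step1 :
      (∑ j : Fin M → Fin d,
          (∑ σ : Equiv.Perm (Fin (M + 1)),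
            ((Equiv.Perm.sign σ : ℤ) : ℝ) *
              ∏ k : Fin (M + 1), w k ((Fin.cons j₀ j : Fin (M + 1) → Fin d) (σ k))) *
          ∏ m : Fin M, B (j m) m) = C.det := by
    rw [Matrix.det_apply']
    simp only [Finset.sum_mul]
    rw [Finset.sum_comm]
    -- reindex permutations by inverse
    rw [← Equiv.sum_comp (Equiv.inv (Equiv.Perm (Fin (M + 1))))
      (fun σ => ((Equiv.Perm.sign σ : ℤ) : ℝ) * ∏ i, C (σ i) i)]
    refine Finset.sum_congr rfl fun σ _ => ?_
    have hsign : ((Equiv.Perm.sign ((Equiv.inv (Equiv.Perm (Fin (M + 1)))) σ) : ℤ) : ℝ)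
        = ((Equiv.Perm.sign σ : ℤ) : ℝ) := by
      simp [Equiv.inv_apply]
    rw [hsign]
    simp only [mul_assoc]
    rw [← Finset.mul_sum]
    congr 1
    -- now fixed σ: compute the sum over j
    have hperm : ∀ j : Fin M → Fin d,
        (∏ k : Fin (M + 1), w k ((Fin.cons j₀ j : Fin (M + 1) → Fin d) (σ k)))
          = ∏ l : Fin (M + 1), w (σ⁻¹ l) ((Fin.cons j₀ j : Fin (M + 1) → Fin d) l) := by
      intro j
      rw [← Equiv.prod_comp σ⁻¹
        (fun k => w k ((Fin.cons j₀ j : Fin (M + 1) → Fin d) (σ k)))]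
      simp
    calc
      ∑ j : Fin M → Fin d,
          (∏ k : Fin (M + 1), w k ((Fin.cons j₀ j : Fin (M + 1) → Fin d) (σ k))) *
            ∏ m : Fin M, B (j m) m
          = ∑ j : Fin M → Fin d,
            w (σ⁻¹ 0) j₀ * ∏ m : Fin M, (w (σ⁻¹ m.succ) (j m) * B (j m) m) := by
            refine Finset.sum_congr rfl fun j _ => ?_
            rw [hperm j, Fin.prod_univ_succ]
            simp [mul_assoc, Finset.prod_mul_distrib]
      _ = w (σ⁻¹ 0) j₀ *
            ∑ j : Fin M → Fin d, ∏ m : Fin M, (w (σ⁻¹ m.succ) (j m) * B (j m) m) := by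
            rw [Finset.mul_sum]
      _ = w (σ⁻¹ 0) j₀ * ∏ m : Fin M, ∑ i : Fin d, w (σ⁻¹ m.succ) i * B i m := by
            rw [Fintype.prod_sum (fun m i => w (σ⁻¹ m.succ) i * B i m)]
      _ = ∏ l : Fin (M + 1), C ((Equiv.inv (Equiv.Perm (Fin (M + 1))) σ) l) l := by
            rw [Fin.prod_univ_succ]
            simp [hC, Equiv.inv_apply]
    -- Step 2 prep below
  rw [step1]
  -- the coefficient vector and the projected vector
  set c : Fin M → ℝ := (Bᵀ * A)⁻¹ *ᵥ (Bᵀ *ᵥ ftilde) with hc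
  set g : Fin d → ℝ := ftilde - A *ᵥ c with hg
  have hBg : Bᵀ *ᵥ g = 0 := by
    have : (Bᵀ * A) * (Bᵀ * A)⁻¹ = 1 :=
      Matrix.mul_nonsing_inv _ (isUnit_iff_ne_zero.mpr hdet)
    rw [hg, Matrix.mulVec_sub, hc, Matrix.mulVec_mulVec, Matrix.mulVec_mulVec,
      this, Matrix.one_mulVec, sub_self]
  -- C equals the row-operated matrix with first row from g
  set w' : Fin (M + 1) → Fin d → ℝ := Fin.cons g (fun m : Fin M => Aᵀ m) with hw'
  set C' : Matrix (Fin (M + 1)) (Fin (M + 1)) ℝ :=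
    Matrix.of fun k => Fin.cons (w' k j₀) (fun m : Fin M => ∑ i, w' k i * B i m) with hC'
  have hdetCC' : C.det = C'.det := by
    have hrow : C = C'.updateRow 0
        (C' 0 + ∑ m ∈ (Finset.univ.image Fin.succ : Finset (Fin (M+1))),
          (Fin.cons 0 c : Fin (M+1) → ℝ) m • C' m) := by
      ext k l
      rcases Fin.eq_zero_or_eq_succ k with hk | ⟨k', rfl⟩
      · subst hk
        rw [Matrix.updateRow_self]
        have hsum : (∑ m ∈ (Finset.univ.image Fin.succ : Finset (Fin (M+1))),
            (Fin.cons 0 c : Fin (M+1) → ℝ) m • C' m)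
            = ∑ m : Fin M, c m • C' m.succ := by
          rw [Finset.sum_image (by intro a _ b _ h; exact Fin.succ_injective _ h)]
          simp
        rw [hsum]
        simp only [Pi.add_apply, Finset.sum_apply, Pi.smul_apply, smul_eq_mul]
        have hfg : ∀ k, ftilde k = g k + ∑ m : Fin M, c m * A k m := by
          intro k
          simp [hg, Matrix.mulVec, dotProduct, mul_comm]
        rcases Fin.eq_zero_or_eq_succ l with hl | ⟨l', rfl⟩
        · subst hl
          simp [hC, hC', hw, hw', hfg j₀]
        · simp only [hC, hC', hw, hw', Matrix.of_apply, Fin.cons_zero, Fin.cons_succ]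
          rw [Finset.sum_congr rfl (fun i _ => by rw [hfg i, add_mul]),
            Finset.sum_add_distrib]
          congr 1
          simp only [Finset.sum_mul]
          rw [Finset.sum_comm]
          simp only [Finset.mul_sum, Matrix.transpose_apply]
          exact Finset.sum_congr rfl fun m _ => Finset.sum_congr rfl fun i _ => by ring
      · rw [Matrix.updateRow_ne (Fin.succ_ne_zero k')]
        simp [hC, hC', hw, hw']
    rw [hrow, det_updateRow_add_sum_smul]
    simp [Fin.succ_ne_zero, eq_comm]
  -- compute det C'
  have hC'det : C'.det = g j₀ * (Bᵀ * A).det := by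
    rw [Matrix.det_succ_row_zero]
    have hzero : ∀ l : Fin M, C' 0 l.succ = 0 := by
      intro l
      have := congrFun hBg l
      simpa [hC', hw', Matrix.mulVec, dotProduct, mul_comm] using this
    rw [Fin.sum_univ_succ]
    have : ∀ l : Fin M, (-1 : ℝ) ^ ((l.succ : Fin (M+1)) : ℕ) * C' 0 l.succ *
        det (C'.submatrix Fin.succ (l.succ).succAbove) = 0 := by
      intro l; rw [hzero l]; ring
    rw [Finset.sum_congr rfl (fun l _ => this l), Finset.sum_const, smul_zero, add_zero]
    have hsub : C'.submatrix Fin.succ (Fin.succAbove 0) = (Bᵀ * A)ᵀ := by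
      ext k l
      simp [hC', hw', Matrix.mul_apply, Matrix.mulVec, dotProduct, mul_comm]
    simp only [Fin.succAbove_zero] at hsub ⊢
    rw [hsub, Matrix.det_transpose]
    simp [hC', hw']
  rw [hdetCC', hC'det]
  have : ((((1 : Matrix (Fin d) (Fin d) ℝ) - A * (Bᵀ * A)⁻¹ * Bᵀ)) *ᵥ ftilde) j₀ = g j₀ := by
    simp [hg, hc, Matrix.sub_mulVec, Matrix.one_mulVec, Matrix.mulVec_mulVec, Matrix.mul_assoc]
  rw [this]
  field_simp
end

section
/- Let B ⊂ ℝ^d be bounded, i : ℝ^d → ℝ^d, and for x ∈ B and R > 0 set B_R(x) = {z : |z - x| ≤ |i(x)|/R}. Suppose g̃ : ℝ^d × ℝ^d × [0,∞) → ℝ^d satisfies: g̃(x,x,0) = f(x), |g̃(u,v,h) - g̃(w,v,h)| ≤ L_g|u-w|, |g̃(u,v,h) - g̃(u,w,h)| ≤ L_g|v-w|, and |g̃(x,x,h) - g̃(x,x,0)| ≤ L_g h|i(x)| for all u,v,w ∈ B_{R_g}(x), x ∈ B, h ∈ [0,H_g); and |f(x)| ≤ C₁|i(x)| on B. Then for every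 x ∈ B, u ∈ B_{2R_g}(x), and h < min{H_g, 1/(6L_g), 1/(4(C₁+1/6)R_g)}, there exists a unique y = Φ_h(u) ∈ B_{R_g}(x) with y = u + h g̃(u,y,h); moreover |Φ_h(u) - u| ≤ (C₁ + 1/6 + 3L_g/(2R_g)) h |i(x)|, and for u,v ∈ B_{2R_g}(x), |Φ_h(u) - Φ_h(v)| ≤ (7/5)|u - v|. -/
set_option maxHeartbeats 1000000


/-- Existence, uniqueness and Lipschitz continuity of the implicitly defined one-step map
y = Φ_h(u) satisfying y = u + h g̃(u,y,h). -/
theorem implicit_one_step_map_exists {d : ℕ}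
    (B : Set (EuclideanSpace ℝ (Fin d))) (hB : Bornology.IsBounded B)
    (f i : EuclideanSpace ℝ (Fin d) → EuclideanSpace ℝ (Fin d))
    (gt : EuclideanSpace ℝ (Fin d) → EuclideanSpace ℝ (Fin d) → ℝ → EuclideanSpace ℝ (Fin d))
    (C₁ Rg Lg Hg : ℝ) (hC : 0 < C₁) (hRg : 0 < Rg) (hLg : 0 < Lg) (hHg : 0 < Hg)
    (hfC : ∀ x ∈ B, ‖f x‖ ≤ C₁ * ‖i x‖)
    (hcons : ∀ x ∈ B, gt x x 0 = f x)
    (hlip1 : ∀ x ∈ B, ∀ u v w : EuclideanSpace ℝ (Fin d),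
      ‖u - x‖ ≤ ‖i x‖ / Rg → ‖v - x‖ ≤ ‖i x‖ / Rg → ‖w - x‖ ≤ ‖i x‖ / Rg →
      ∀ h : ℝ, 0 ≤ h → h < Hg → ‖gt u v h - gt w v h‖ ≤ Lg * ‖u - w‖)
    (hlip2 : ∀ x ∈ B, ∀ u v w : EuclideanSpace ℝ (Fin d),
      ‖u - x‖ ≤ ‖i x‖ / Rg → ‖v - x‖ ≤ ‖i x‖ / Rg → ‖w - x‖ ≤ ‖i x‖ / Rg →
      ∀ h : ℝ, 0 ≤ h → h < Hg → ‖gt u v h - gt u w h‖ ≤ Lg * ‖v - w‖)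
    (hlip3 : ∀ x ∈ B, ∀ h : ℝ, 0 ≤ h → h < Hg →
      ‖gt x x h - gt x x 0‖ ≤ Lg * h * ‖i x‖) :
    ∀ x ∈ B, ∀ h : ℝ, 0 ≤ h →
      h < min Hg (min (1 / (6 * Lg)) (1 / (4 * (C₁ + 1 / 6) * Rg))) →
      (∀ u : EuclideanSpace ℝ (Fin d), ‖u - x‖ ≤ ‖i x‖ / (2 * Rg) →
        (∃! y : EuclideanSpace ℝ (Fin d),
          ‖y - x‖ ≤ ‖i x‖ / Rg ∧ y = u + h • gt u y h) ∧
        (∀ y : EuclideanSpace ℝ (Fin d), ‖y - x‖ ≤ ‖i x‖ / Rg → y = u + h • gt u y h →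
          ‖y - u‖ ≤ (C₁ + 1 / 6 + 3 * Lg / (2 * Rg)) * h * ‖i x‖)) ∧
      (∀ u v : EuclideanSpace ℝ (Fin d),
        ‖u - x‖ ≤ ‖i x‖ / (2 * Rg) → ‖v - x‖ ≤ ‖i x‖ / (2 * Rg) →
        ∀ y z : EuclideanSpace ℝ (Fin d),
          (‖y - x‖ ≤ ‖i x‖ / Rg ∧ y = u + h • gt u y h) →
          (‖z - x‖ ≤ ‖i x‖ / Rg ∧ z = v + h • gt v z h) →
          ‖y - z‖ ≤ (7 / 5) * ‖u - v‖) := by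
  intro x hx h hh0 hhlt
  have hH : h < Hg := lt_of_lt_of_le hhlt (min_le_left _ _)
  have h6 : h < 1 / (6 * Lg) :=
    lt_of_lt_of_le hhlt ((min_le_right _ _).trans (min_le_left _ _))
  have h4 : h < 1 / (4 * (C₁ + 1 / 6) * Rg) :=
    lt_of_lt_of_le hhlt ((min_le_right _ _).trans (min_le_right _ _))
  have hiN : (0 : ℝ) ≤ ‖i x‖ := norm_nonneg _
  set r : ℝ := ‖i x‖ / Rg with hrdef
  have hr0 : 0 ≤ r := div_nonneg hiN hRg.le
  have hN : ‖i x‖ = r * Rg := by rw [hrdef, div_mul_cancel₀ _ hRg.ne']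
  have hhalf : ‖i x‖ / (2 * Rg) = r / 2 := by rw [hN]; field_simp
  have hxmem : ‖x - x‖ ≤ r := by simp [hr0]
  have hA : h * Lg ≤ 1 / 6 := by
    have hp : (0 : ℝ) < 6 * Lg := by positivity
    have := (lt_div_iff₀ hp).mp h6
    nlinarith
  have hBm : 4 * (C₁ + 1 / 6) * Rg * h ≤ 1 := by
    have hp : (0 : ℝ) < 4 * (C₁ + 1 / 6) * Rg := by positivity
    have := (lt_div_iff₀ hp).mp h4
    nlinarith
  -- basic bound on gt
  have key : ∀ u y : EuclideanSpace ℝ (Fin d), ‖u - x‖ ≤ r → ‖y - x‖ ≤ r →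
      ‖gt u y h‖ ≤ Lg * ‖u - x‖ + Lg * ‖y - x‖ + Lg * h * ‖i x‖ + C₁ * ‖i x‖ := by
    intro u y hu hy
    have e1 : ‖gt u y h - gt x y h‖ ≤ Lg * ‖u - x‖ :=
      hlip1 x hx u y x hu hy hxmem h hh0 hH
    have e2 : ‖gt x y h - gt x x h‖ ≤ Lg * ‖y - x‖ :=
      hlip2 x hx x y x hxmem hy hxmem h hh0 hH
    have e3 : ‖gt x x h - gt x x 0‖ ≤ Lg * h * ‖i x‖ := hlip3 x hx h hh0 hH
    have e4 : ‖gt x x 0‖ ≤ C₁ * ‖i x‖ := by rw [hcons x hx]; exact hfC x hx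
    have t1 := norm_sub_norm_le (gt u y h) (gt x y h)
    have t2 := norm_sub_norm_le (gt x y h) (gt x x h)
    have t3 := norm_sub_norm_le (gt x x h) (gt x x 0)
    linarith
  have keyb : ∀ u y : EuclideanSpace ℝ (Fin d), ‖u - x‖ ≤ r / 2 → ‖y - x‖ ≤ r →
      ‖gt u y h‖ ≤ 3 / 2 * Lg * r + (C₁ + 1 / 6) * (r * Rg) := by
    intro u y hu hy
    have hG := key u y (hu.trans (by linarith)) hy
    rw [hN] at hG
    nlinarith [mul_nonneg hLg.le (by linarith : (0:ℝ) ≤ r / 2 - ‖u - x‖),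
      mul_nonneg hLg.le (by linarith : (0:ℝ) ≤ r - ‖y - x‖),
      mul_nonneg (by linarith : (0:ℝ) ≤ 1 / 6 - h * Lg)
        (by positivity : (0:ℝ) ≤ r * Rg)]
  have hinv : ∀ u y : EuclideanSpace ℝ (Fin d), ‖u - x‖ ≤ r / 2 → ‖y - x‖ ≤ r →
      ‖u + h • gt u y h - x‖ ≤ r := by
    intro u y hu hy
    have hGb := keyb u y hu hy
    have hn : ‖u + h • gt u y h - x‖ ≤ ‖u - x‖ + h * ‖gt u y h‖ := by
      have e : u + h • gt u y h - x = (u - x) + h • gt u y h := by abel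
      rw [e]
      calc ‖(u - x) + h • gt u y h‖ ≤ ‖u - x‖ + ‖h • gt u y h‖ := norm_add_le _ _
        _ = ‖u - x‖ + h * ‖gt u y h‖ := by
            rw [norm_smul, Real.norm_of_nonneg hh0]
    nlinarith [mul_le_mul_of_nonneg_left hGb hh0,
      mul_nonneg (by linarith : (0:ℝ) ≤ 1 / 6 - h * Lg) hr0,
      mul_nonneg (by linarith : (0:ℝ) ≤ 1 - 4 * (C₁ + 1 / 6) * Rg * h) hr0]
  have hcontr : ∀ u y z : EuclideanSpace ℝ (Fin d), ‖u - x‖ ≤ r → ‖y - x‖ ≤ r →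
      ‖z - x‖ ≤ r →
      ‖(u + h • gt u y h) - (u + h • gt u z h)‖ ≤ (h * Lg) * ‖y - z‖ := by
    intro u y z hu hy hz
    have e : (u + h • gt u y h) - (u + h • gt u z h) = h • (gt u y h - gt u z h) := by
      rw [smul_sub]; abel
    rw [e, norm_smul, Real.norm_of_nonneg hh0]
    calc h * ‖gt u y h - gt u z h‖ ≤ h * (Lg * ‖y - z‖) :=
          mul_le_mul_of_nonneg_left (hlip2 x hx u y z hu hy hz h hh0 hH) hh0
      _ = (h * Lg) * ‖y - z‖ := by ring
  have huniq : ∀ u y z : EuclideanSpace ℝ (Fin d), ‖u - x‖ ≤ r → ‖y - x‖ ≤ r →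
      ‖z - x‖ ≤ r → y = u + h • gt u y h → z = u + h • gt u z h → y = z := by
    intro u y z hu hy hz hyeq hzeq
    have e : ‖y - z‖ ≤ (h * Lg) * ‖y - z‖ := by
      calc ‖y - z‖ = ‖(u + h • gt u y h) - (u + h • gt u z h)‖ := by
            rw [← hyeq, ← hzeq]
        _ ≤ (h * Lg) * ‖y - z‖ := hcontr u y z hu hy hz
    have hn0 : ‖y - z‖ ≤ 0 := by
      nlinarith [norm_nonneg (y - z),
        mul_nonneg (by linarith : (0:ℝ) ≤ 1 / 6 - h * Lg) (norm_nonneg (y - z))]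
    have : ‖y - z‖ = 0 := le_antisymm hn0 (norm_nonneg _)
    exact sub_eq_zero.mp (norm_eq_zero.mp this)
  constructor
  · intro u hu
    have hu2 : ‖u - x‖ ≤ r / 2 := by rwa [hhalf] at hu
    have hur : ‖u - x‖ ≤ r := hu2.trans (by linarith)
    haveI : Nonempty (Metric.closedBall x r) :=
      ⟨⟨x, Metric.mem_closedBall_self hr0⟩⟩
    haveI : CompleteSpace (Metric.closedBall x r) :=
      Metric.isClosed_closedBall.completeSpace_coe
    have memnorm : ∀ y : Metric.closedBall x r, ‖(y : EuclideanSpace ℝ (Fin d)) - x‖ ≤ r := by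
      intro y
      have := y.2
      rwa [Metric.mem_closedBall, dist_eq_norm] at this
    set T : Metric.closedBall x r → Metric.closedBall x r := fun y =>
      ⟨u + h • gt u y h, by
        rw [Metric.mem_closedBall, dist_eq_norm]
        exact hinv u y hu2 (memnorm y)⟩ with hT
    set K : NNReal := ⟨h * Lg, mul_nonneg hh0 hLg.le⟩ with hK
    have hK1 : K < 1 := by
      rw [← NNReal.coe_lt_coe, NNReal.coe_one]
      show h * Lg < 1
      linarith
    have hlipT : LipschitzWith K T := by
      apply LipschitzWith.of_dist_le_mul
      intro y z
      rw [Subtype.dist_eq, Subtype.dist_eq, dist_eq_norm, dist_eq_norm]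
      exact hcontr u y z hur (memnorm y) (memnorm z)
    have hCW : ContractingWith K T := ⟨hK1, hlipT⟩
    set y₀ : Metric.closedBall x r := hCW.fixedPoint T with hy₀def
    have hfix : T y₀ = y₀ := hCW.fixedPoint_isFixedPt
    have hyeq : (y₀ : EuclideanSpace ℝ (Fin d)) = u + h • gt u y₀ h := by
      conv_lhs => rw [← hfix]
    refine ⟨⟨(y₀ : EuclideanSpace ℝ (Fin d)), ⟨memnorm y₀, hyeq⟩, ?_⟩, ?_⟩
    · rintro z ⟨hz1, hz2⟩
      exact huniq u z y₀ hur hz1 (memnorm y₀) hz2 hyeq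
    · intro y hy hyeq'
      have hGb := keyb u y hu2 hy
      have e : y - u = h • gt u y h := sub_eq_of_eq_add' hyeq'
      have hn : ‖y - u‖ = h * ‖gt u y h‖ := by
        rw [e, norm_smul, Real.norm_of_nonneg hh0]
      have hRHS : (C₁ + 1 / 6 + 3 * Lg / (2 * Rg)) * h * ‖i x‖
          = h * (3 / 2 * Lg * r + (C₁ + 1 / 6) * (r * Rg)) := by
        rw [hN]; field_simp; ring
      rw [hn, hRHS]
      exact mul_le_mul_of_nonneg_left hGb hh0
  · rintro u v hu hv y z ⟨hy, hyeq⟩ ⟨hz, hzeq⟩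
    have hu2 : ‖u - x‖ ≤ r / 2 := by rwa [hhalf] at hu
    have hv2 : ‖v - x‖ ≤ r / 2 := by rwa [hhalf] at hv
    have hur : ‖u - x‖ ≤ r := hu2.trans (by linarith)
    have hvr : ‖v - x‖ ≤ r := hv2.trans (by linarith)
    have e : y - z = (u - v) + (h • gt u y h - h • gt v z h) := by
      calc y - z = (u + h • gt u y h) - (v + h • gt v z h) := by rw [← hyeq, ← hzeq]
        _ = (u - v) + (h • gt u y h - h • gt v z h) := by abel
    have hgb : ‖gt u y h - gt v z h‖ ≤ Lg * ‖u - v‖ + Lg * ‖y - z‖ := by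
      have e1 : ‖gt u y h - gt v y h‖ ≤ Lg * ‖u - v‖ :=
        hlip1 x hx u y v hur hy hvr h hh0 hH
      have e2 : ‖gt v y h - gt v z h‖ ≤ Lg * ‖y - z‖ :=
        hlip2 x hx v y z hvr hy hz h hh0 hH
      have t := norm_sub_le_norm_sub_add_norm_sub (gt u y h) (gt v y h) (gt v z h)
      linarith
    have hmain : ‖y - z‖ ≤ ‖u - v‖ + h * (Lg * ‖u - v‖ + Lg * ‖y - z‖) := by
      calc ‖y - z‖ = ‖(u - v) + (h • gt u y h - h • gt v z h)‖ := by rw [e]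
        _ ≤ ‖u - v‖ + ‖h • gt u y h - h • gt v z h‖ := norm_add_le _ _
        _ = ‖u - v‖ + h * ‖gt u y h - gt v z h‖ := by
            rw [← smul_sub, norm_smul, Real.norm_of_nonneg hh0]
        _ ≤ ‖u - v‖ + h * (Lg * ‖u - v‖ + Lg * ‖y - z‖) := by
            have := mul_le_mul_of_nonneg_left hgb hh0
            linarith
    nlinarith [norm_nonneg (y - z), norm_nonneg (u - v),
      mul_nonneg (by linarith : (0:ℝ) ≤ 1 / 6 - h * Lg) (norm_nonneg (y - z)),
      mul_nonneg (by linarith : (0:ℝ) ≤ 1 / 6 - h * Lg) (norm_nonneg (u - v))]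
end
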